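/- Let Λ = M ⊕ Zk ⊕ Zℓ with M even unimodular, k² = −2d, ℓ² = −2t (d, t > 0). Let β = am + bk + cℓ be a primitive vector (m ∈ M primitive, gcd(a,b,c) = 1) with β² < 0 and β² | 2·div(β). Then the induced action of the reflection r_β on A_Λ ≅ Z/2dZ × Z/2tZ (generated by k* = [k/2d] and ℓ* = [ℓ/2t]) is the identity if and only if β² = −2. -/

import Mathlib

/-!
STATEMENT 13. `Λ = M ⊕ ℤk ⊕ ℤℓ`, `M` even unimodular, `k² = -2d`, `ℓ² = -2t` (`d, t > 0`).
A primitive vector `β = a•m + b•k + c•ℓ` (`m ∈ M` primitive, `gcd(a,b,c) = 1`, `m² = m2`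
even) has `β² = a² m2 - 2d b² - 2t c²` and `div(β) = gcd(a, 2d b, 2t c)`.  Assume `β² < 0`
and `β² ∣ 2 div(β)`, so that `r_β ∈ O(Λ)`.  The induced action of `r_β` on
`A_Λ ≅ ℤ/2d × ℤ/2t` (basis `k* = [k/2d]`, `ℓ* = [ℓ/2t]`) is the matrix
`[[1 + 4db²/β², 4dbc/β²], [4tbc/β², 1 + 4tc²/β²]]` (entries mod `2d`, resp. mod `2t`).
This action is the identity iff `β² = -2`.
-/
theorem stmt_13 (t d a b c m2 β2 D : ℤ) (ht : 0 < t) (hd : 0 < d)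
    (hprim : Int.gcd (Int.gcd a b) c = 1) (heven : 2 ∣ m2)
    (hβ2 : β2 = a ^ 2 * m2 - 2 * d * b ^ 2 - 2 * t * c ^ 2) (hneg : β2 < 0)
    (hD : D = Int.gcd (Int.gcd a (2 * d * b)) (2 * t * c))
    (hrefl : β2 ∣ 2 * D) :
    (∃ e₁₁ e₁₂ e₂₁ e₂₂ : ℤ,
        β2 * e₁₁ = 4 * d * b ^ 2 ∧ β2 * e₁₂ = 4 * d * b * c ∧
        β2 * e₂₁ = 4 * t * b * c ∧ β2 * e₂₂ = 4 * t * c ^ 2 ∧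
        1 + e₁₁ ≡ 1 [ZMOD 2 * d] ∧ e₁₂ ≡ 0 [ZMOD 2 * d] ∧
        e₂₁ ≡ 0 [ZMOD 2 * t] ∧ 1 + e₂₂ ≡ 1 [ZMOD 2 * t])
      ↔ β2 = -2 := by
  constructor
  · rintro ⟨e₁₁, e₁₂, e₂₁, e₂₂, h1, h2, h3, h4, c1, c2, c3, c4⟩
    have hd0 : (2 * d : ℤ) ≠ 0 := by positivity
    have ht0 : (2 * t : ℤ) ≠ 0 := by positivity
    -- e₁₁ divisible by 2d
    have d11 : (2 * d : ℤ) ∣ e₁₁ := by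
      have := (Int.modEq_iff_dvd.mp c1)
      simpa using this.neg_right
    have d22 : (2 * t : ℤ) ∣ e₂₂ := by
      have := (Int.modEq_iff_dvd.mp c4)
      simpa using this.neg_right
    have d12 : (2 * d : ℤ) ∣ e₁₂ := (Int.modEq_zero_iff_dvd.mp c2)
    -- cancel to get β2 ∣ 2b², 2bc, 2c²
    obtain ⟨f, hf⟩ := d11
    have hb2 : β2 ∣ 2 * b ^ 2 := by
      refine ⟨f, mul_left_cancel₀ hd0 ?_⟩
      rw [hf] at h1; linarith [h1]
    obtain ⟨g, hg⟩ := d12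
    have hbc : β2 ∣ 2 * b * c := by
      refine ⟨g, mul_left_cancel₀ hd0 ?_⟩
      rw [hg] at h2; linarith [h2]
    obtain ⟨k, hk⟩ := d22
    have hc2 : β2 ∣ 2 * c ^ 2 := by
      refine ⟨k, mul_left_cancel₀ ht0 ?_⟩
      rw [hk] at h4; linarith [h4]
    -- β2 ∣ 2a
    have hDa : D ∣ a := by
      rw [hD]
      exact dvd_trans (Int.gcd_dvd_left _ _) (Int.gcd_dvd_left _ _)
    have ha : β2 ∣ 2 * a := hrefl.trans (mul_dvd_mul_left 2 hDa)
    -- β2 = 2s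
    obtain ⟨m', hm'⟩ := heven
    set s : ℤ := a ^ 2 * m' - d * b ^ 2 - t * c ^ 2 with hs
    have hβs : β2 = 2 * s := by rw [hβ2, hm']; ring
    have hsa : s ∣ a := by
      obtain ⟨q, hq⟩ := ha
      exact ⟨q, by apply mul_left_cancel₀ (two_ne_zero (α := ℤ)); rw [hβs] at hq; linarith⟩
    have hsb : s ∣ b ^ 2 := by
      obtain ⟨q, hq⟩ := hb2
      exact ⟨q, by apply mul_left_cancel₀ (two_ne_zero (α := ℤ)); rw [hβs] at hq; linarith⟩
    have hsc : s ∣ c ^ 2 := by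
      obtain ⟨q, hq⟩ := hc2
      exact ⟨q, by apply mul_left_cancel₀ (two_ne_zero (α := ℤ)); rw [hβs] at hq; linarith⟩
    -- s.natAbs = 1
    have hone : s.natAbs = 1 := by
      by_contra hne
      obtain ⟨p, hp, hpd⟩ := Nat.exists_prime_and_dvd hne
      have hpa : p ∣ a.natAbs := hpd.trans (Int.natAbs_dvd_natAbs.mpr hsa)
      have hpb : p ∣ b.natAbs := by
        have : p ∣ (b ^ 2).natAbs := hpd.trans (Int.natAbs_dvd_natAbs.mpr hsb)
        rw [Int.natAbs_pow] at this
        exact hp.dvd_of_dvd_pow this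
      have hpc : p ∣ c.natAbs := by
        have : p ∣ (c ^ 2).natAbs := hpd.trans (Int.natAbs_dvd_natAbs.mpr hsc)
        rw [Int.natAbs_pow] at this
        exact hp.dvd_of_dvd_pow this
      have : p ∣ 1 := by
        rw [← hprim]
        unfold Int.gcd
        exact Nat.dvd_gcd (by simpa using Nat.dvd_gcd hpa hpb) hpc
      exact hp.one_lt.ne' (Nat.dvd_one.mp this)
    have : s = 1 ∨ s = -1 := Int.natAbs_eq_iff.mp hone |>.imp (by simp) (by simp)
    rcases this with h | h
    · exfalso; rw [hβs, h] at hneg; norm_num at hneg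
    · rw [hβs, h]; norm_num
  · intro hβ
    subst hβ
    refine ⟨-(2 * d * b ^ 2), -(2 * d * b * c), -(2 * t * b * c), -(2 * t * c ^ 2),
      by ring, by ring, by ring, by ring, ?_, ?_, ?_, ?_⟩
    · exact (Int.modEq_iff_dvd.mpr ⟨b ^ 2, by ring⟩)
    · exact (Int.modEq_zero_iff_dvd.mpr ⟨-(b * c), by ring⟩)
    · exact (Int.modEq_zero_iff_dvd.mpr ⟨-(b * c), by ring⟩)
    · exact (Int.modEq_iff_dvd.mpr ⟨c ^ 2, by ring⟩)
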